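/- For γ > 0, the proximal operator of γ·g* is given by: prox_{γg*}(v) = v if |v| ≤ τ; prox_{γg*}(v) = τ·sign(v) if τ < |v| ≤ τ + γμ; and prox_{γg*}(v) = prox_{γh*}(v) if |v| > τ + γμ. -/

import Mathlib

noncomputable section

open Set
open scoped Classical

/-- Convex (Fenchel) conjugate of an extended-real-valued function on `ℝ`. -/
def conj (f : ℝ → EReal) (v : ℝ) : EReal := ⨆ x : ℝ, ((v * x : ℝ) : EReal) - f x

/-- Convex subdifferential of an extended-real-valued function on `ℝ`. -/
def subdiff (f : ℝ → EReal) (x : ℝ) : Set ℝ :=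
  {d : ℝ | ∀ y : ℝ, f x + ((d * (y - x) : ℝ) : EReal) ≤ f y}

/-- Convexity of an extended-real-valued function on `ℝ`. -/
def EConvexOn (f : ℝ → EReal) : Prop :=
  ∀ x y a b : ℝ, 0 ≤ a → 0 ≤ b → a + b = 1 →
    f (a * x + b * y) ≤ (a : EReal) * f x + (b : EReal) * f y

/-- The ℓ₀-penalized regularizer `g(x) = λ‖x‖₀ + h(x)`. -/
def gfun (lam : ℝ) (h : ℝ → EReal) (x : ℝ) : EReal :=
  (if x = 0 then (0 : EReal) else (lam : EReal)) + h x

/-- The parameter `τ = sup {v ≥ 0 : h*(v) ≤ λ}` (as a real number). -/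
def tau (lam : ℝ) (h : ℝ → EReal) : ℝ :=
  sSup {v : ℝ | 0 ≤ v ∧ conj h v ≤ (lam : EReal)}

/-- The parameter `μ = sup {x ≥ 0 : x ∈ ∂h*(τ)}` if `∂h*(τ) ≠ ∅`, else `+∞`. -/
def mu (lam : ℝ) (h : ℝ → EReal) : EReal :=
  if (subdiff (conj h) (tau lam h)).Nonempty then
    sSup ((fun x : ℝ => (x : EReal)) '' {x : ℝ | 0 ≤ x ∧ x ∈ subdiff (conj h) (tau lam h)})
  else ⊤

/-- The parameter `β = sup {v ≥ 0 : v ∈ dom h*}`. -/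
def beta (h : ℝ → EReal) : EReal :=
  sSup ((fun v : ℝ => (v : EReal)) '' {v : ℝ | 0 ≤ v ∧ conj h v ≠ ⊤})

/-- The parameter `κ = sup {v ≥ 0 : v ∈ ∂h(μ)}` if `μ < +∞`, else `+∞`. -/
def kappa (lam : ℝ) (h : ℝ → EReal) : EReal :=
  if mu lam h ≠ ⊤ then
    sSup ((fun v : ℝ => (v : EReal)) '' {v : ℝ | 0 ≤ v ∧ v ∈ subdiff h (mu lam h).toReal})
  else ⊤

/-- The set of minimizers of `u ↦ ½(u − v)² + γ·ω(u)`, i.e. `prox_{γω}(v)`. -/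
def proxSet (γ : ℝ) (ω : ℝ → EReal) (v : ℝ) : Set ℝ :=
  {u : ℝ | ∀ w : ℝ,
    ((2⁻¹ * (u - v) ^ 2 : ℝ) : EReal) + (γ : EReal) * ω u ≤
      ((2⁻¹ * (w - v) ^ 2 : ℝ) : EReal) + (γ : EReal) * ω w}

-- lemma group 1: conj basics
section Basics

variable {f : ℝ → EReal}

lemma term_le_conj (f : ℝ → EReal) (v x : ℝ) : ((v * x : ℝ) : EReal) - f x ≤ conj f v :=
  le_iSup (fun x => ((v * x : ℝ) : EReal) - f x) x

lemma conj_le (f : ℝ → EReal) (v : ℝ) (c : EReal)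
    (H : ∀ x, ((v * x : ℝ) : EReal) - f x ≤ c) : conj f v ≤ c :=
  iSup_le H

lemma conj_nonneg (h0 : f 0 = 0) (v : ℝ) : 0 ≤ conj f v := by
  have := term_le_conj f v 0
  rw [h0, mul_zero] at this
  simpa using this

lemma conj_zero (h0 : f 0 = 0) (hge : ∀ x, 0 ≤ f x) : conj f 0 = 0 := by
  refine le_antisymm (conj_le _ _ _ fun x => ?_) (conj_nonneg h0 0)
  rw [zero_mul]
  cases' eq_or_ne (f x) ⊤ with hx hx
  · simp [hx, EReal.sub_top]
  · have hgx := hge x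
    have hb : f x ≠ ⊥ := fun hbb => by rw [hbb] at hgx; exact absurd hgx (by simp)
    lift f x to ℝ using ⟨hx, hb⟩ with r hr
    have : (0:ℝ) ≤ r := by exact_mod_cast hgx
    rw [show ((0:ℝ):EReal) - (r:EReal) = ((0 - r : ℝ) : EReal) from (EReal.coe_sub 0 r).symm]
    exact_mod_cast by linarith

lemma conj_even (hev : ∀ x, f (-x) = f x) (v : ℝ) : conj f (-v) = conj f v := by
  have key : ∀ w : ℝ, conj f (-w) ≤ conj f w := by
    intro w
    refine conj_le _ _ _ fun x => ?_
    have := term_le_conj f w (-x)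
    rw [hev x] at *
    calc ((-w * x : ℝ) : EReal) - f x = ((w * -x : ℝ) : EReal) - f (-x) := by rw [hev]; ring_nf
    _ ≤ conj f w := term_le_conj f w (-x)
  refine le_antisymm (key v) ?_
  have := key (-v)
  rwa [neg_neg] at this

lemma conj_convex (hf : ∀ x, f x ≠ ⊥) : EConvexOn (conj f) := by
  intro p q a b ha hb hab
  refine conj_le _ _ _ fun x => ?_
  have h1 : ((p * x : ℝ) : EReal) - f x ≤ conj f p := term_le_conj f p x
  have h2 : ((q * x : ℝ) : EReal) - f x ≤ conj f q := term_le_conj f q x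
  have key : (((a * p + b * q) * x : ℝ) : EReal) - f x ≤
      (a : EReal) * (((p * x : ℝ) : EReal) - f x) + (b : EReal) * (((q * x : ℝ) : EReal) - f x) := by
    cases' eq_or_ne (f x) ⊤ with hx hx
    · simp [hx, EReal.sub_top]
    · lift f x to ℝ using ⟨hx, hf x⟩ with r hr
      have : ((a * p + b * q) * x - r : ℝ) = a * (p * x - r) + b * (q * x - r) := by
        linear_combination r * hab
      exact_mod_cast le_of_eq this
  refine key.trans (add_le_add ?_ ?_)
  · exact mul_le_mul_of_nonneg_left h1 (by exact_mod_cast ha)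
  · exact mul_le_mul_of_nonneg_left h2 (by exact_mod_cast hb)

end Basics
section Group2

lemma bot_lt_zero' : (⊥ : EReal) < 0 := bot_lt_iff_ne_bot.mpr (by simp)

variable {lam : ℝ} {h : ℝ → EReal}

lemma gfun_zero (h0 : h 0 = 0) : gfun lam h 0 = 0 := by simp [gfun, h0]

lemma gfun_nonneg (hlam : 0 < lam) (hge : ∀ x, 0 ≤ h x) (x : ℝ) : 0 ≤ gfun lam h x := by
  unfold gfun
  have : (0:EReal) ≤ (if x = 0 then (0 : EReal) else (lam : EReal)) := by
    split
    · exact le_refl _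
    · exact_mod_cast hlam.le
  exact add_nonneg this (hge x)

lemma gfun_even (h0 : h 0 = 0) (hev : ∀ x, h (-x) = h x) (x : ℝ) :
    gfun lam h (-x) = gfun lam h x := by
  simp [gfun, hev, neg_eq_zero]

lemma conj_gfun_eq (hlam : 0 < lam) (h0 : h 0 = 0) (hge : ∀ x, 0 ≤ h x) (v : ℝ) :
    conj (gfun lam h) v = max 0 (conj h v - (lam : EReal)) := by
  refine le_antisymm (conj_le _ _ _ fun x => ?_) ?_
  · rcases eq_or_ne x 0 with rfl | hx
    · rw [gfun_zero h0]
      simp only [mul_zero]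
      calc ((0:ℝ) : EReal) - 0 = 0 := by simp
      _ ≤ _ := le_max_left _ _
    · have hgf : gfun lam h x = (lam : EReal) + h x := by simp [gfun, hx]
      rw [hgf]
      cases' eq_or_ne (h x) ⊤ with ht ht
      · rw [ht, EReal.coe_add_top, EReal.sub_top]
        exact bot_le
      · have hgx := hge x
        have hb : h x ≠ ⊥ := fun hbb => by rw [hbb] at hgx; exact absurd hgx (by simp)
        lift h x to ℝ using ⟨ht, hb⟩ with r hr
        have step : ((v * x : ℝ) : EReal) - ((lam : EReal) + (r : EReal)) =
            ((v * x - r : ℝ) : EReal) - (lam : EReal) := by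
          norm_cast
          ring
        rw [step]
        refine le_trans ?_ (le_max_right _ _)
        have h1 : ((v * x - r : ℝ) : EReal) ≤ conj h v := by
          have := term_le_conj h v x
          rw [← hr] at this
          rw [EReal.coe_sub]
          exact this
        exact EReal.sub_le_sub h1 (le_refl _)
  · rw [max_le_iff]
    constructor
    · exact conj_nonneg (gfun_zero h0) v
    · rw [EReal.sub_le_iff_le_add (Or.inl (EReal.coe_ne_bot lam)) (Or.inl (EReal.coe_ne_top lam))]
      refine conj_le _ _ _ fun x => ?_
      rcases eq_or_ne x 0 with rfl | hx
      · rw [h0, mul_zero]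
        have h1 : (0:EReal) ≤ conj (gfun lam h) v := conj_nonneg (gfun_zero h0) v
        have h2 : (0:EReal) ≤ (lam : EReal) := by exact_mod_cast hlam.le
        calc ((0:ℝ):EReal) - 0 = 0 := by simp
        _ ≤ _ := add_nonneg h1 h2
      · have hgf : gfun lam h x = (lam : EReal) + h x := by simp [gfun, hx]
        cases' eq_or_ne (h x) ⊤ with ht ht
        · rw [ht, EReal.sub_top]
          exact bot_le
        · have hgx := hge x
          have hb : h x ≠ ⊥ := fun hbb => by rw [hbb] at hgx; exact absurd hgx (by simp)
          lift h x to ℝ using ⟨ht, hb⟩ with r hr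
          have key : ((v * x : ℝ) : EReal) - (r:EReal) =
              (((v * x : ℝ) : EReal) - ((lam : EReal) + (r:EReal))) + (lam : EReal) := by
            norm_cast
            ring
          rw [key]
          refine add_le_add ?_ (le_refl _)
          have := term_le_conj (gfun lam h) v x
          rwa [hgf] at this
  
lemma convex_between {Φ : ℝ → EReal} (hc : EConvexOn Φ) {x y z rx ry : ℝ}
    (hxy : x < y) (hxz : x ≤ z) (hzy : z ≤ y) (hx : Φ x = (rx : EReal)) (hy : Φ y = (ry : EReal)) :
    Φ z ≤ (((y - z) / (y - x) * rx + (z - x) / (y - x) * ry : ℝ) : EReal) := by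
  have hd : (0:ℝ) < y - x := by linarith
  have ha : (0:ℝ) ≤ (y - z) / (y - x) := div_nonneg (by linarith) hd.le
  have hb : (0:ℝ) ≤ (z - x) / (y - x) := div_nonneg (by linarith) hd.le
  have hab : (y - z) / (y - x) + (z - x) / (y - x) = 1 := by field_simp; ring
  have hz : (y - z) / (y - x) * x + (z - x) / (y - x) * y = z := by field_simp; ring
  have := hc x y ((y - z) / (y - x)) ((z - x) / (y - x)) ha hb hab
  rw [hz, hx, hy] at this
  calc Φ z ≤ _ := this
  _ = _ := by rw [← EReal.coe_mul, ← EReal.coe_mul, ← EReal.coe_add]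

lemma conj_mono (hge : ∀ x, 0 ≤ h x) (h0 : h 0 = 0) (hev : ∀ x, h (-x) = h x)
    {a b : ℝ} (ha : 0 ≤ a) (hab : a ≤ b) : conj h a ≤ conj h b := by
  rcases eq_or_lt_of_le (ha.trans hab) with hb0 | hb0
  · have : a = b := le_antisymm hab (by rw [← hb0]; exact ha)
    rw [this]
  cases' eq_or_ne (conj h b) ⊤ with ht ht
  · rw [ht]; exact le_top
  have hrb : ∃ r : ℝ, conj h b = (r : EReal) := by
    have h1 : conj h b ≠ ⊥ := ne_of_gt (lt_of_lt_of_le bot_lt_zero' (conj_nonneg h0 b))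
    exact ⟨(conj h b).toReal, (EReal.coe_toReal ht h1).symm⟩
  obtain ⟨r, hr⟩ := hrb
  have hnegb : conj h (-b) = (r : EReal) := by rw [conj_even hev, hr]
  have := convex_between (conj_convex (fun x => ne_of_gt (lt_of_lt_of_le bot_lt_zero' (hge x))))
    (x := -b) (y := b) (z := a) (by linarith) (by linarith) hab hnegb hr
  refine this.trans ?_
  have : ((b - a) / (b - -b) * r + (a - -b) / (b - -b) * r : ℝ) = r := by
    field_simp
    ring
  rw [this, hr]

lemma bot_lt_zero'' : (⊥ : EReal) < 0 := bot_lt_iff_ne_bot.mpr (by simp)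

end Group2
section Tau

variable {lam : ℝ} {h : ℝ → EReal}

lemma ereal_exists_real {x : EReal} (hne : x ≠ ⊤) (hnn : 0 ≤ x) : ∃ r : ℝ, 0 ≤ r ∧ x = (r : EReal) := by
  have hb : x ≠ ⊥ := ne_of_gt (lt_of_lt_of_le bot_lt_zero' hnn)
  refine ⟨x.toReal, ?_, (EReal.coe_toReal hne hb).symm⟩
  have := EReal.coe_toReal hne hb
  rw [← EReal.coe_nonneg, this]
  exact hnn

lemma tau_def : tau lam h = sSup {v : ℝ | 0 ≤ v ∧ conj h v ≤ (lam : EReal)} := rfl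

lemma Sset_zero_mem (hlam : 0 < lam) (h0 : h 0 = 0) (hge : ∀ x, 0 ≤ h x) :
    (0:ℝ) ∈ {v : ℝ | 0 ≤ v ∧ conj h v ≤ (lam : EReal)} := by
  refine ⟨le_refl _, ?_⟩
  rw [conj_zero h0 hge]
  exact_mod_cast hlam.le

lemma Sset_bddAbove (h0 : h 0 = 0) (hge : ∀ x, 0 ≤ h x) (hdom : ∃ x : ℝ, 0 < x ∧ h x ≠ ⊤) :
    BddAbove {v : ℝ | 0 ≤ v ∧ conj h v ≤ (lam : EReal)} := by
  obtain ⟨x₀, hx₀, hfin⟩ := hdom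
  obtain ⟨r₀, hr₀, hx⟩ := ereal_exists_real hfin (hge x₀)
  refine ⟨(lam + r₀) / x₀, fun v hv => ?_⟩
  have h1 : ((v * x₀ - r₀ : ℝ) : EReal) ≤ (lam : EReal) := by
    refine le_trans ?_ hv.2
    have := term_le_conj h v x₀
    rw [hx] at this
    rw [EReal.coe_sub]
    exact this
  have h2 : v * x₀ - r₀ ≤ lam := by exact_mod_cast h1
  rw [le_div_iff₀ hx₀]
  linarith

lemma Sset_closed (hge : ∀ x, 0 ≤ h x) :
    IsClosed {v : ℝ | 0 ≤ v ∧ conj h v ≤ (lam : EReal)} := by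
  have heq : {v : ℝ | 0 ≤ v ∧ conj h v ≤ (lam : EReal)} =
      {v : ℝ | 0 ≤ v} ∩ ⋂ x : ℝ, {v : ℝ | ((v * x : ℝ) : EReal) - h x ≤ (lam : EReal)} := by
    ext v
    simp only [Set.mem_setOf_eq, Set.mem_inter_iff, Set.mem_iInter]
    refine and_congr_right fun _ => ?_
    constructor
    · intro H x
      exact le_trans (term_le_conj h v x) H
    · intro H
      exact conj_le _ _ _ H
  rw [heq]
  refine IsClosed.inter (isClosed_le continuous_const continuous_id) (isClosed_iInter fun x => ?_)
  cases' eq_or_ne (h x) ⊤ with ht ht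
  · have : {v : ℝ | ((v * x : ℝ) : EReal) - h x ≤ (lam : EReal)} = Set.univ := by
      ext v
      simp [ht, EReal.sub_top]
    rw [this]
    exact isClosed_univ
  · obtain ⟨r, _, hx⟩ := ereal_exists_real ht (hge x)
    have : {v : ℝ | ((v * x : ℝ) : EReal) - h x ≤ (lam : EReal)} = {v : ℝ | v * x - r ≤ lam} := by
      ext v
      rw [Set.mem_setOf_eq, Set.mem_setOf_eq, hx, ← EReal.coe_sub, EReal.coe_le_coe_iff]
    rw [this]
    exact isClosed_le (by continuity) continuous_const

lemma tau_mem (hlam : 0 < lam) (h0 : h 0 = 0) (hge : ∀ x, 0 ≤ h x)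
    (hdom : ∃ x : ℝ, 0 < x ∧ h x ≠ ⊤) :
    (tau lam h) ∈ {v : ℝ | 0 ≤ v ∧ conj h v ≤ (lam : EReal)} := by
  rw [tau_def]
  exact IsClosed.csSup_mem (Sset_closed hge) ⟨0, Sset_zero_mem hlam h0 hge⟩
    (Sset_bddAbove h0 hge hdom)

lemma tau_nonneg (hlam : 0 < lam) (h0 : h 0 = 0) (hge : ∀ x, 0 ≤ h x)
    (hdom : ∃ x : ℝ, 0 < x ∧ h x ≠ ⊤) : 0 ≤ tau lam h :=
  (tau_mem hlam h0 hge hdom).1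

lemma conj_tau_le (hlam : 0 < lam) (h0 : h 0 = 0) (hge : ∀ x, 0 ≤ h x)
    (hdom : ∃ x : ℝ, 0 < x ∧ h x ≠ ⊤) : conj h (tau lam h) ≤ (lam : EReal) :=
  (tau_mem hlam h0 hge hdom).2

lemma le_tau (h0 : h 0 = 0) (hge : ∀ x, 0 ≤ h x) (hdom : ∃ x : ℝ, 0 < x ∧ h x ≠ ⊤)
    {w : ℝ} (hw : 0 ≤ w) (hcw : conj h w ≤ (lam : EReal)) : w ≤ tau lam h :=
  le_csSup (Sset_bddAbove h0 hge hdom) ⟨hw, hcw⟩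

lemma lam_lt_conj (h0 : h 0 = 0) (hge : ∀ x, 0 ≤ h x) (hdom : ∃ x : ℝ, 0 < x ∧ h x ≠ ⊤)
    {w : ℝ} (hw : 0 ≤ w) (htw : tau lam h < w) : (lam : EReal) < conj h w := by
  by_contra hc
  push_neg at hc
  exact absurd (le_tau h0 hge hdom hw hc) (not_le.mpr htw)

end Tau

section SGsec

/-- subgradient-type optimality condition -/
def SG (γ : ℝ) (ω : ℝ → EReal) (u v : ℝ) : Prop :=
  ∀ w : ℝ, (γ : EReal) * ω u + (((v - u) * (w - u) : ℝ) : EReal) ≤ (γ : EReal) * ω w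

variable {γ : ℝ} {ω : ℝ → EReal} {u v : ℝ}

lemma SG_finite (hγ : 0 < γ) (hω : ∀ x, 0 ≤ ω x) (hω0 : ω 0 = 0) (hsg : SG γ ω u v) :
    ∃ r : ℝ, 0 ≤ r ∧ ω u = (r : EReal) := by
  have := hsg 0
  rw [hω0, mul_zero] at this
  refine ereal_exists_real ?_ (hω u)
  intro htop
  rw [htop, EReal.coe_mul_top_of_pos hγ] at this
  have h2 : ((⊤:EReal) + ((v - u) * (0 - u) : ℝ)) = ⊤ := by
    rw [add_comm]
    exact EReal.coe_add_top _
  rw [h2] at this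
  exact absurd this (by simp)

lemma SG_mem_prox (hγ : 0 < γ) (hω : ∀ x, 0 ≤ ω x) (hω0 : ω 0 = 0) (hsg : SG γ ω u v) :
    u ∈ proxSet γ ω v := by
  obtain ⟨ru, hru, hu⟩ := SG_finite hγ hω hω0 hsg
  intro w
  cases' eq_or_ne (ω w) ⊤ with ht ht
  · rw [ht, EReal.coe_mul_top_of_pos hγ, add_comm]
    rw [EReal.coe_add_top]
    exact le_top
  obtain ⟨rw', hrw, hw⟩ := ereal_exists_real ht (hω w)
  have key := hsg w
  rw [hu, hw] at key ⊢
  have kr : γ * ru + (v - u) * (w - u) ≤ γ * rw' := by exact_mod_cast key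
  have : 2⁻¹ * (u - v) ^ 2 + γ * ru ≤ 2⁻¹ * (w - v) ^ 2 + γ * rw' := by
    nlinarith [sq_nonneg (w - u)]
  exact_mod_cast this

lemma prox_SG (hγ : 0 < γ) (hω : ∀ x, 0 ≤ ω x) (hω0 : ω 0 = 0) (hconv : EConvexOn ω)
    (hmem : u ∈ proxSet γ ω v) : SG γ ω u v := by
  have hfin : ω u ≠ ⊤ := by
    intro htop
    have := hmem 0
    rw [hω0, mul_zero, add_zero, htop, EReal.coe_mul_top_of_pos hγ, EReal.coe_add_top] at this
    exact EReal.coe_ne_top _ (top_le_iff.mp this)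
  obtain ⟨ru, hru, hu⟩ := ereal_exists_real hfin (hω u)
  intro w
  cases' eq_or_ne (ω w) ⊤ with ht ht
  · rw [ht, EReal.coe_mul_top_of_pos hγ]
    exact le_top
  obtain ⟨rw', hrw, hw⟩ := ereal_exists_real ht (hω w)
  -- the per-t inequality
  have per_t : ∀ t : ℝ, 0 < t → t ≤ 1 →
      γ * ru + (v - u) * (w - u) ≤ γ * rw' + t * (2⁻¹ * (w - u) ^ 2) := by
    intro t ht0 ht1
    set wt := (1 - t) * u + t * w with hwt
    have hcv := hconv u w (1 - t) t (by linarith) ht0.le (by ring)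
    rw [hu, hw] at hcv
    have hcv2 : ω wt ≤ (((1 - t) * ru + t * rw' : ℝ) : EReal) := by
      refine hcv.trans (le_of_eq ?_)
      rw [← EReal.coe_mul, ← EReal.coe_mul, ← EReal.coe_add]
    obtain ⟨rwt, hrwt, hwteq⟩ := ereal_exists_real (ne_top_of_le_ne_top (EReal.coe_ne_top _) hcv2) (hω wt)
    have hrwt2 : rwt ≤ (1 - t) * ru + t * rw' := by
      rw [hwteq] at hcv2
      exact_mod_cast hcv2
    have hprox := hmem wt
    rw [hu, hwteq] at hprox
    have hpr : 2⁻¹ * (u - v) ^ 2 + γ * ru ≤ 2⁻¹ * (wt - v) ^ 2 + γ * rwt := by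
      exact_mod_cast hprox
    have hexp : wt - v = (u - v) + t * (w - u) := by rw [hwt]; ring
    rw [hexp] at hpr
    have h3 : γ * t * ru ≤ t * (u - v) * (w - u) + 2⁻¹ * t ^ 2 * (w - u) ^ 2 + γ * t * rw' := by
      nlinarith [hpr, hrwt2, hγ]
    nlinarith [h3, ht0, mul_pos ht0 ht0]
  have main : γ * ru + (v - u) * (w - u) ≤ γ * rw' := by
    set C := 2⁻¹ * (w - u) ^ 2 with hC
    have hC0 : 0 ≤ C := by positivity
    refine le_of_forall_pos_le_add fun ε hε => ?_
    have ht0 : 0 < min 1 (ε / (C + 1)) := lt_min one_pos (by positivity)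
    have := per_t _ ht0 (min_le_left _ _)
    refine this.trans ?_
    have : min 1 (ε / (C + 1)) * C ≤ ε := by
      calc min 1 (ε / (C + 1)) * C ≤ (ε / (C + 1)) * C :=
        mul_le_mul_of_nonneg_right (min_le_right _ _) hC0
      _ ≤ ε := by
        rw [div_mul_eq_mul_div, div_le_iff₀ (by positivity)]
        nlinarith
    linarith
  rw [hu, hw]
  exact_mod_cast main

lemma prox_eq_singleton (hγ : 0 < γ) (hω : ∀ x, 0 ≤ ω x) (hω0 : ω 0 = 0)
    (hconv : EConvexOn ω) (hsg : SG γ ω u v) : proxSet γ ω v = {u} := by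
  ext u'
  simp only [Set.mem_singleton_iff]
  constructor
  · intro hmem
    have hsg' := prox_SG hγ hω hω0 hconv hmem
    obtain ⟨r, hr, hu⟩ := SG_finite hγ hω hω0 hsg
    obtain ⟨r', hr', hu'⟩ := SG_finite hγ hω hω0 hsg'
    have k1 := hsg u'
    have k2 := hsg' u
    rw [hu, hu'] at k1 k2
    have k1r : γ * r + (v - u) * (u' - u) ≤ γ * r' := by exact_mod_cast k1
    have k2r : γ * r' + (v - u') * (u - u') ≤ γ * r := by exact_mod_cast k2
    nlinarith [k1r, k2r]
  · rintro rfl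
    exact SG_mem_prox hγ hω hω0 hsg

end SGsec
section Mu

variable {lam : ℝ} {h : ℝ → EReal}

/-- at τ = 0, 0 is always a subgradient of F -/
lemma zero_mem_subdiff_zero (h0 : h 0 = 0) (hge : ∀ x, 0 ≤ h x) :
    (0:ℝ) ∈ subdiff (conj h) 0 := by
  intro y
  rw [conj_zero h0 hge]
  simpa using conj_nonneg h0 y

/-- at τ > 0, subgradients of F are nonnegative -/
lemma subdiff_nonneg_of_pos (hlam : 0 < lam) (h0 : h 0 = 0) (hge : ∀ x, 0 ≤ h x)
    (hdom : ∃ x : ℝ, 0 < x ∧ h x ≠ ⊤) (hev : ∀ x, h (-x) = h x)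
    (htpos : 0 < tau lam h) {d : ℝ} (hd : d ∈ subdiff (conj h) (tau lam h)) : 0 ≤ d := by
  set τ := tau lam h
  obtain ⟨rτ, hrτ0, hrτ⟩ := ereal_exists_real
    (ne_top_of_le_ne_top (EReal.coe_ne_top lam) (conj_tau_le hlam h0 hge hdom))
    (conj_nonneg h0 τ)
  have := hd (-τ)
  rw [hrτ, conj_even hev, hrτ] at this
  have hr : rτ + d * (-τ - τ) ≤ rτ := by exact_mod_cast this
  nlinarith [htpos]

/-- the restricted subgradient set is nonempty whenever the subdifferential is -/
lemma restricted_nonempty (hlam : 0 < lam) (h0 : h 0 = 0) (hge : ∀ x, 0 ≤ h x)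
    (hdom : ∃ x : ℝ, 0 < x ∧ h x ≠ ⊤) (hev : ∀ x, h (-x) = h x)
    (hne : (subdiff (conj h) (tau lam h)).Nonempty) :
    ∃ x : ℝ, 0 ≤ x ∧ x ∈ subdiff (conj h) (tau lam h) := by
  rcases eq_or_lt_of_le (tau_nonneg hlam h0 hge hdom) with ht0 | htpos
  · exact ⟨0, le_refl _, by rw [← ht0]; exact zero_mem_subdiff_zero h0 hge⟩
  · obtain ⟨d, hd⟩ := hne
    exact ⟨d, subdiff_nonneg_of_pos hlam h0 hge hdom hev htpos hd, hd⟩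

lemma mu_nonneg (hlam : 0 < lam) (h0 : h 0 = 0) (hge : ∀ x, 0 ≤ h x)
    (hdom : ∃ x : ℝ, 0 < x ∧ h x ≠ ⊤) (hev : ∀ x, h (-x) = h x) : 0 ≤ mu lam h := by
  unfold mu
  split
  · next hne =>
      obtain ⟨x, hx0, hx⟩ := restricted_nonempty hlam h0 hge hdom hev hne
      have hmem : ((x:ℝ):EReal) ∈ (fun x : ℝ => (x : EReal)) ''
          {x : ℝ | 0 ≤ x ∧ x ∈ subdiff (conj h) (tau lam h)} := ⟨x, ⟨hx0, hx⟩, rfl⟩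
      exact le_trans (by exact_mod_cast hx0) (le_sSup hmem)
  · exact le_top

/-- if some w > τ has F w finite then F τ = λ -/
lemma conj_tau_eq_lam (hlam : 0 < lam) (h0 : h 0 = 0) (hge : ∀ x, 0 ≤ h x)
    (hdom : ∃ x : ℝ, 0 < x ∧ h x ≠ ⊤) (hev : ∀ x, h (-x) = h x)
    {w rw' : ℝ} (hw : tau lam h < w) (hFw : conj h w = (rw' : EReal)) :
    conj h (tau lam h) = (lam : EReal) := by
  set τ := tau lam h with hτ
  have hτ0 : 0 ≤ τ := tau_nonneg hlam h0 hge hdom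
  obtain ⟨rτ, hrτ0, hrτ⟩ := ereal_exists_real
    (ne_top_of_le_ne_top (EReal.coe_ne_top lam) (conj_tau_le hlam h0 hge hdom))
    (conj_nonneg h0 τ)
  have hrτlam : rτ ≤ lam := by
    have := conj_tau_le hlam h0 hge hdom
    rw [hrτ] at this
    exact_mod_cast this
  have hrwlam : lam < rw' := by
    have := lam_lt_conj h0 hge hdom (le_trans hτ0 hw.le) hw
    rw [hFw] at this
    exact_mod_cast this
  rw [hrτ]
  rcases eq_or_lt_of_le hrτlam with heq | hlt
  · rw [heq]
  exfalso
  -- pick z between τ and w with F z ≤ λ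
  set t : ℝ := (lam - rτ) / (rw' - rτ) with htdef
  have ht0 : 0 < t := div_pos (by linarith) (by linarith)
  have ht1 : t < 1 := by
    rw [div_lt_one (by linarith)]
    linarith
  set z : ℝ := τ + t * (w - τ) with hzdef
  have hzτ : τ < z := by nlinarith
  have hzw : z < w := by nlinarith
  have hcb := convex_between (conj_convex
      (fun x => ne_of_gt (lt_of_lt_of_le bot_lt_zero' (hge x))))
    hw (le_of_lt hzτ) (le_of_lt hzw) hrτ hFw
  have hwτ : w - τ ≠ 0 := by intro hc; nlinarith
  have hc1 : (z - τ) / (w - τ) = t := by rw [hzdef]; field_simp; ring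
  have hc2 : (w - z) / (w - τ) = 1 - t := by rw [hzdef]; field_simp; ring
  have hmul : t * (rw' - rτ) = lam - rτ := by
    rw [htdef]
    exact div_mul_cancel₀ _ (by intro hc; nlinarith)
  have hcoef : ((w - z) / (w - τ) * rτ + (z - τ) / (w - τ) * rw' : ℝ) = lam := by
    rw [hc1, hc2]
    linear_combination hmul
  rw [hcoef] at hcb
  exact absurd (le_tau h0 hge hdom (by linarith) hcb) (not_le.mpr hzτ)

/-- the three-slope inequality: for 0 ≤ y < τ < w, slope(y,τ) ≤ slope(τ,w), given F τ = λ -/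
lemma slope_bound (hlam : 0 < lam) (h0 : h 0 = 0) (hge : ∀ x, 0 ≤ h x)
    (hdom : ∃ x : ℝ, 0 < x ∧ h x ≠ ⊤)
    (hτlam : conj h (tau lam h) = (lam : EReal))
    {y ry w rw' : ℝ} (hy0 : 0 ≤ y) (hyτ : y < tau lam h) (hw : tau lam h < w)
    (hFy : conj h y = (ry : EReal)) (hFw : conj h w = (rw' : EReal)) :
    (lam - ry) / (tau lam h - y) ≤ (rw' - lam) / (w - tau lam h) := by
  set τ := tau lam h
  have hcb := convex_between (conj_convex
      (fun x => ne_of_gt (lt_of_lt_of_le bot_lt_zero' (hge x))))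
    (lt_trans hyτ hw) (le_of_lt hyτ) (le_of_lt hw) hFy hFw
  rw [hτlam] at hcb
  have hr : lam ≤ (w - τ) / (w - y) * ry + (τ - y) / (w - y) * rw' := by exact_mod_cast hcb
  rw [div_le_div_iff₀ (by linarith) (by linarith)]
  have hwy : 0 < w - y := by linarith
  have h2 : lam * (w - y) ≤ (w - τ) * ry + (τ - y) * rw' := by
    have := mul_le_mul_of_nonneg_right hr hwy.le
    calc lam * (w - y) ≤ ((w - τ) / (w - y) * ry + (τ - y) / (w - y) * rw') * (w - y) := this
    _ = (w - τ) * ry + (τ - y) * rw' := by field_simp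
  nlinarith

/-- construction of a subgradient at τ, and the bound μ ≤ slope -/
lemma mu_le_slope (hlam : 0 < lam) (h0 : h 0 = 0) (hge : ∀ x, 0 ≤ h x)
    (hdom : ∃ x : ℝ, 0 < x ∧ h x ≠ ⊤) (hev : ∀ x, h (-x) = h x)
    {w rw' : ℝ} (hw : tau lam h < w) (hFw : conj h w = (rw' : EReal)) :
    mu lam h ≤ (((rw' - lam) / (w - tau lam h) : ℝ) : EReal) := by
  set τ := tau lam h with hτdef
  have hτ0 : 0 ≤ τ := tau_nonneg hlam h0 hge hdom
  have hτlam : conj h τ = (lam : EReal) := conj_tau_eq_lam hlam h0 hge hdom hev hw hFw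
  have hτpos : 0 < τ := by
    rcases eq_or_lt_of_le hτ0 with ht0 | htpos
    · exfalso
      rw [← ht0, conj_zero h0 hge] at hτlam
      have : (0:ℝ) = lam := by exact_mod_cast hτlam
      linarith
    · exact htpos
  set q : ℝ := (rw' - lam) / (w - τ) with hqdef
  -- real values of F on [0, τ)
  have hFy : ∀ y : ℝ, 0 ≤ y → y ≤ τ → ∃ r : ℝ, 0 ≤ r ∧ r ≤ lam ∧ conj h y = (r : EReal) := by
    intro y hy0 hyτ
    have hle : conj h y ≤ (lam : EReal) := by
      calc conj h y ≤ conj h τ := conj_mono hge h0 hev hy0 hyτ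
      _ = (lam : EReal) := hτlam
    obtain ⟨r, hr0, hr⟩ := ereal_exists_real (ne_top_of_le_ne_top (EReal.coe_ne_top lam) hle)
      (conj_nonneg h0 y)
    refine ⟨r, hr0, ?_, hr⟩
    rw [hr] at hle
    exact_mod_cast hle
  -- the left-slope function
  set A : Set ℝ := (fun y : ℝ => (lam - (conj h y).toReal) / (τ - y)) '' Set.Ico 0 τ with hA
  have hslA : ∀ y : ℝ, 0 ≤ y → y < τ → (lam - (conj h y).toReal) / (τ - y) ≤ q := by
    intro y hy0 hyτ
    obtain ⟨r, hr0, hrlam, hr⟩ := hFy y hy0 hyτ.le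
    rw [hr, EReal.toReal_coe]
    exact slope_bound hlam h0 hge hdom hτlam hy0 hyτ hw hr hFw
  have hAne : A.Nonempty := ⟨_, ⟨0, ⟨le_refl _, hτpos⟩, rfl⟩⟩
  have hAbdd : BddAbove A := by
    refine ⟨q, ?_⟩
    rintro s ⟨y, ⟨hy0, hyτ⟩, rfl⟩
    exact hslA y hy0 hyτ
  set L : ℝ := sSup A with hL
  have hLq : L ≤ q := csSup_le hAne (by rintro s ⟨y, ⟨hy0, hyτ⟩, rfl⟩; exact hslA y hy0 hyτ)
  have hLpos : 0 < L := by
    have h0A : lam / τ ∈ A := by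
      refine ⟨0, ⟨le_refl _, hτpos⟩, ?_⟩
      show (lam - (conj h 0).toReal) / (τ - 0) = lam / τ
      rw [conj_zero h0 hge]
      simp
    have := le_csSup hAbdd h0A
    have hlτ : 0 < lam / τ := div_pos hlam hτpos
    linarith
  -- L is a subgradient at τ (first for y ≥ 0)
  have hkey : ∀ y : ℝ, 0 ≤ y → ((lam + L * (y - τ) : ℝ) : EReal) ≤ conj h y := by
    intro y hy0
    rcases lt_trichotomy y τ with hyτ | hyτ | hyτ
    · obtain ⟨r, hr0, hrlam, hr⟩ := hFy y hy0 hyτ.le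
      rw [hr]
      have hmem : (lam - r) / (τ - y) ∈ A := by
        refine ⟨y, ⟨hy0, hyτ⟩, ?_⟩
        show (lam - (conj h y).toReal) / (τ - y) = (lam - r) / (τ - y)
        rw [hr, EReal.toReal_coe]
      have := le_csSup hAbdd hmem
      have hτy : 0 < τ - y := by linarith
      rw [div_le_iff₀ hτy] at this
      exact_mod_cast by nlinarith
    · rw [hyτ, hτlam]
      exact_mod_cast le_of_eq (by ring)
    · cases' eq_or_ne (conj h y) ⊤ with htp htp
      · rw [htp]; exact le_top
      obtain ⟨r, hr0, hr⟩ := ereal_exists_real htp (conj_nonneg h0 y)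
      rw [hr]
      have hLy : L ≤ (r - lam) / (y - τ) :=
        csSup_le hAne (by
          rintro s ⟨y', ⟨hy'0, hy'τ⟩, rfl⟩
          obtain ⟨r', hr'0, hr'lam, hr'⟩ := hFy y' hy'0 hy'τ.le
          show (lam - (conj h y').toReal) / (τ - y') ≤ (r - lam) / (y - τ)
          rw [hr', EReal.toReal_coe]
          exact slope_bound hlam h0 hge hdom hτlam hy'0 hy'τ hyτ hr' hr)
      have hyτ' : 0 < y - τ := by linarith
      rw [le_div_iff₀ hyτ'] at hLy
      exact_mod_cast by nlinarith
  have hLsub : L ∈ subdiff (conj h) τ := by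
    intro y
    rw [hτlam]
    rcases le_or_gt 0 y with hy0 | hy0
    · exact_mod_cast hkey y hy0
    · calc ((lam:ℝ) : EReal) + ((L * (y - τ) : ℝ) : EReal)
          = ((lam + L * (y - τ) : ℝ) : EReal) := by norm_cast
      _ ≤ ((lam + L * (-y - τ) : ℝ) : EReal) := by
          exact_mod_cast (by nlinarith [hLpos, hy0] : lam + L * (y - τ) ≤ lam + L * (-y - τ))
      _ ≤ conj h (-y) := hkey (-y) (by linarith)
      _ = conj h y := conj_even hev y
  have hmu : mu lam h = sSup ((fun x : ℝ => (x : EReal)) ''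
      {x : ℝ | 0 ≤ x ∧ x ∈ subdiff (conj h) (tau lam h)}) := by
    unfold mu
    rw [if_pos ⟨L, hLsub⟩]
  rw [hmu]
  refine sSup_le ?_
  rintro e ⟨x, ⟨hx0, hx⟩, rfl⟩
  show (x : EReal) ≤ (q : EReal)
  have hxw := hx w
  rw [hτlam, hFw] at hxw
  have hr : lam + x * (w - τ) ≤ rw' := by exact_mod_cast hxw
  have hxq : x ≤ q := by rw [hqdef, le_div_iff₀ (by linarith)]; nlinarith
  exact_mod_cast hxq

end Mu
section Core

variable {lam : ℝ} {h : ℝ → EReal}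

lemma case2_core (hlam : 0 < lam) (h0 : h 0 = 0) (hge : ∀ x, 0 ≤ h x)
    (hdom : ∃ x : ℝ, 0 < x ∧ h x ≠ ⊤) (hev : ∀ x, h (-x) = h x)
    {w s : ℝ} (hw : tau lam h < w) (hs : 0 ≤ s) (hsmu : (s : EReal) ≤ mu lam h) :
    ((lam + s * (w - tau lam h) : ℝ) : EReal) ≤ conj h w := by
  cases' eq_or_ne (conj h w) ⊤ with ht ht
  · rw [ht]; exact le_top
  obtain ⟨rw', hrw0, hFw⟩ := ereal_exists_real ht (conj_nonneg h0 w)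
  have hq := mu_le_slope hlam h0 hge hdom hev hw hFw
  have hsq : s ≤ (rw' - lam) / (w - tau lam h) := by exact_mod_cast le_trans hsmu hq
  rw [hFw]
  rw [le_div_iff₀ (by linarith)] at hsq
  exact_mod_cast by nlinarith

lemma mu_real (hlam : 0 < lam) (h0 : h 0 = 0) (hge : ∀ x, 0 ≤ h x)
    (hdom : ∃ x : ℝ, 0 < x ∧ h x ≠ ⊤) (hev : ∀ x, h (-x) = h x)
    (hm : mu lam h ≠ ⊤) :
    ∃ m : ℝ, 0 ≤ m ∧ mu lam h = (m : EReal) ∧ (subdiff (conj h) (tau lam h)).Nonempty ∧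
      ∀ x ∈ subdiff (conj h) (tau lam h), 0 ≤ x → x ≤ m := by
  have hne : (subdiff (conj h) (tau lam h)).Nonempty := by
    by_contra hc
    rw [mu, if_neg hc] at hm
    exact hm rfl
  obtain ⟨m, hm0, hmeq⟩ := ereal_exists_real hm (mu_nonneg hlam h0 hge hdom hev)
  refine ⟨m, hm0, hmeq, hne, fun x hx hx0 => ?_⟩
  have hle : ((x:ℝ):EReal) ≤ mu lam h := by
    rw [mu, if_pos hne]
    exact le_sSup ⟨x, ⟨hx0, hx⟩, rfl⟩
  rw [hmeq] at hle
  exact_mod_cast hle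

lemma phi_nonneg (h0 : h 0 = 0) (v : ℝ) : 0 ≤ conj (gfun lam h) v :=
  conj_nonneg (gfun_zero h0) v

lemma phi_zero (hlam : 0 < lam) (h0 : h 0 = 0) (hge : ∀ x, 0 ≤ h x) :
    conj (gfun lam h) 0 = 0 := by
  rw [conj_gfun_eq hlam h0 hge, conj_zero h0 hge]
  have h1 : (0 : EReal) - (lam : EReal) = ((-lam : ℝ) : EReal) := by
    rw [show (0:EReal) = ((0:ℝ):EReal) from rfl, ← EReal.coe_sub]
    norm_num
  rw [h1]
  exact max_eq_left (by exact_mod_cast (by linarith : (-lam : ℝ) ≤ 0))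

lemma phi_real (hlam : 0 < lam) (h0 : h 0 = 0) (hge : ∀ x, 0 ≤ h x) {w r : ℝ}
    (hr : conj h w = (r : EReal)) :
    conj (gfun lam h) w = ((max 0 (r - lam) : ℝ) : EReal) := by
  rw [conj_gfun_eq hlam h0 hge, hr, ← EReal.coe_sub]
  rcases le_total (r - lam) 0 with hc | hc
  · rw [max_eq_left (by exact_mod_cast hc), max_eq_left hc]
    rfl
  · rw [max_eq_right (by exact_mod_cast hc), max_eq_right hc]

lemma phi_top (hlam : 0 < lam) (h0 : h 0 = 0) (hge : ∀ x, 0 ≤ h x) {w : ℝ}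
    (hr : conj h w = ⊤) : conj (gfun lam h) w = ⊤ := by
  rw [conj_gfun_eq hlam h0 hge, hr, EReal.top_sub_coe]
  exact max_eq_right le_top

lemma phi_zero_of_le (hlam : 0 < lam) (h0 : h 0 = 0) (hge : ∀ x, 0 ≤ h x) {w : ℝ}
    (hle : conj h w ≤ (lam : EReal)) : conj (gfun lam h) w = 0 := by
  obtain ⟨r, hr0, hr⟩ := ereal_exists_real (ne_top_of_le_ne_top (EReal.coe_ne_top lam) hle)
    (conj_nonneg h0 w)
  rw [phi_real hlam h0 hge hr]
  have : r ≤ lam := by rw [hr] at hle; exact_mod_cast hle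
  rw [max_eq_left (by linarith)]
  rfl

lemma conj_abs (h0 : h 0 = 0) (hev : ∀ x, h (-x) = h x) (v : ℝ) : conj h v = conj h |v| := by
  rcases le_or_gt 0 v with hc | hc
  · rw [abs_of_nonneg hc]
  · rw [abs_of_neg hc]
    exact (conj_even hev v).symm

lemma SG_neg {γ : ℝ} {ω : ℝ → EReal} (hev : ∀ x, ω (-x) = ω x) {u v : ℝ} (hsg : SG γ ω u v) :
    SG γ ω (-u) (-v) := by
  intro w
  have h1 := hsg (-w)
  rw [hev w] at h1
  have e : ((-v - -u) * (w - -u) : ℝ) = ((v - u) * (-w - u) : ℝ) := by ring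
  rw [hev u, e]
  exact h1

lemma SG_to_subdiff {γ : ℝ} (hγ : 0 < γ) {F : ℝ → EReal} {u v ru : ℝ}
    (hFu : F u = (ru : EReal)) (hFge : ∀ x, 0 ≤ F x) (hFb : ∀ x, F x ≠ ⊥)
    (hsg : SG γ F u v) : (v - u) / γ ∈ subdiff F u := by
  intro y
  have hy' := hsg y
  cases' eq_or_ne (F y) ⊤ with ht ht
  · rw [ht]; exact le_top
  obtain ⟨ry, _, hy⟩ := ereal_exists_real ht (hFge y)
  rw [hFu, hy] at hy' ⊢
  have hr : γ * ru + (v - u) * (y - u) ≤ γ * ry := by exact_mod_cast hy'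
  have h2 : ((v - u) * (y - u)) / γ ≤ ry - ru := by rw [div_le_iff₀ hγ]; nlinarith
  have h3 : ru + (v - u) / γ * (y - u) ≤ ry := by
    rw [div_mul_eq_mul_div]
    linarith
  exact_mod_cast h3

end Core
section Case3

variable {lam : ℝ} {h : ℝ → EReal}

lemma SG_F_to_phi (hlam : 0 < lam) (h0 : h 0 = 0) (hge : ∀ x, 0 ≤ h x)
    (hdom : ∃ x : ℝ, 0 < x ∧ h x ≠ ⊤) (hev : ∀ x, h (-x) = h x)
    {γ m u v : ℝ} (hγ : 0 < γ) (hm0 : 0 ≤ m)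
    (hne : (subdiff (conj h) (tau lam h)).Nonempty)
    (hbd : ∀ x ∈ subdiff (conj h) (tau lam h), 0 ≤ x → x ≤ m)
    (hv : tau lam h + γ * m < v)
    (hsg : SG γ (conj h) u v) : SG γ (conj (gfun lam h)) u v := by
  set τ := tau lam h with hτdef
  have hτ0 : 0 ≤ τ := tau_nonneg hlam h0 hge hdom
  have hv0 : 0 < v := by nlinarith
  have hFb : ∀ x, conj h x ≠ ⊥ :=
    fun x => ne_of_gt (lt_of_lt_of_le bot_lt_zero' (conj_nonneg h0 x))
  have h00 := hsg 0
  rw [conj_zero h0 hge, mul_zero] at h00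
  have hFufin : conj h u ≠ ⊤ := by
    intro htop
    rw [htop, EReal.coe_mul_top_of_pos hγ, EReal.top_add_coe] at h00
    exact (by simp : ¬ (⊤:EReal) ≤ 0) h00
  obtain ⟨ru, hru0, hFu⟩ := ereal_exists_real hFufin (conj_nonneg h0 u)
  rw [hFu] at h00
  have h00r : γ * ru + (v - u) * (0 - u) ≤ 0 := by exact_mod_cast h00
  have hu0 : 0 ≤ u := by
    by_contra hcu
    push_neg at hcu
    nlinarith [mul_pos (show (0:ℝ) < v - u by linarith) (show (0:ℝ) < -u by linarith),
      mul_nonneg hγ.le hru0]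
  have huv : u ≤ v := by
    by_contra hcu
    push_neg at hcu
    nlinarith [mul_pos (show (0:ℝ) < u - v by linarith) (show (0:ℝ) < u by linarith),
      mul_nonneg hγ.le hru0]
  have huτ : τ < u := by
    by_contra hc
    push_neg at hc
    have hs : (v - u) / γ ∈ subdiff (conj h) u :=
      SG_to_subdiff hγ hFu (conj_nonneg h0) hFb hsg
    have hs0 : 0 ≤ (v - u) / γ := div_nonneg (by linarith) hγ.le
    have hsm : m < (v - u) / γ := by rw [lt_div_iff₀ hγ]; nlinarith
    rcases eq_or_lt_of_le hc with heq | hlt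
    · have hs' : (v - u) / γ ∈ subdiff (conj h) τ := by rw [← heq]; exact hs
      exact absurd (hbd _ hs' hs0) (not_le.mpr hsm)
    · obtain ⟨t, htsub⟩ := hne
      obtain ⟨rτ, hrτ0, hτeq⟩ := ereal_exists_real
        (ne_top_of_le_ne_top (EReal.coe_ne_top lam) (conj_tau_le hlam h0 hge hdom))
        (conj_nonneg h0 τ)
      have h1 := htsub u
      rw [hτeq, hFu] at h1
      have r1 : rτ + t * (u - τ) ≤ ru := by exact_mod_cast h1
      have h2 := hs τ
      rw [hτeq, hFu] at h2
      have r2 : ru + (v - u) / γ * (τ - u) ≤ rτ := by exact_mod_cast h2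
      have hst : (v - u) / γ ≤ t := by nlinarith
      have ht0 : 0 ≤ t := le_trans hs0 hst
      have := hbd t htsub ht0
      nlinarith
  have hlamu : lam < ru := by
    have := lam_lt_conj h0 hge hdom (le_trans hτ0 huτ.le) huτ
    rw [hFu] at this
    exact_mod_cast this
  have hφu : conj (gfun lam h) u = ((ru - lam : ℝ) : EReal) := by
    rw [phi_real hlam h0 hge hFu, max_eq_right (by linarith)]
  intro w
  rw [hφu]
  cases' eq_or_ne (conj h w) ⊤ with ht ht
  · rw [phi_top hlam h0 hge ht, EReal.coe_mul_top_of_pos hγ]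
    exact le_top
  obtain ⟨rw', hrw0, hFw⟩ := ereal_exists_real ht (conj_nonneg h0 w)
  rw [phi_real hlam h0 hge hFw]
  have hw := hsg w
  rw [hFu, hFw] at hw
  have hwr : γ * ru + (v - u) * (w - u) ≤ γ * rw' := by exact_mod_cast hw
  have : γ * (ru - lam) + (v - u) * (w - u) ≤ γ * max 0 (rw' - lam) := by
    nlinarith [le_max_right (0:ℝ) (rw' - lam), hγ]
  exact_mod_cast this

set_option maxHeartbeats 1000000 in
lemma SG_phi_to_F (hlam : 0 < lam) (h0 : h 0 = 0) (hge : ∀ x, 0 ≤ h x)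
    (hdom : ∃ x : ℝ, 0 < x ∧ h x ≠ ⊤) (hev : ∀ x, h (-x) = h x)
    {γ m u v : ℝ} (hγ : 0 < γ) (hm0 : 0 ≤ m)
    (hne : (subdiff (conj h) (tau lam h)).Nonempty)
    (hbd : ∀ x ∈ subdiff (conj h) (tau lam h), 0 ≤ x → x ≤ m)
    (hv : tau lam h + γ * m < v)
    (hsg : SG γ (conj (gfun lam h)) u v) : SG γ (conj h) u v := by
  set τ := tau lam h with hτdef
  have hτ0 : 0 ≤ τ := tau_nonneg hlam h0 hge hdom
  have hτv : τ < v := by nlinarith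
  have hv0 : 0 < v := lt_of_le_of_lt hτ0 hτv
  have hFb : ∀ x, conj h x ≠ ⊥ :=
    fun x => ne_of_gt (lt_of_lt_of_le bot_lt_zero' (conj_nonneg h0 x))
  have hhb : ∀ x, h x ≠ ⊥ := fun x => ne_of_gt (lt_of_lt_of_le bot_lt_zero' (hge x))
  have h00 := hsg 0
  rw [phi_zero hlam h0 hge, mul_zero] at h00
  have hφufin : conj (gfun lam h) u ≠ ⊤ := by
    intro htop
    rw [htop, EReal.coe_mul_top_of_pos hγ, EReal.top_add_coe] at h00
    exact (by simp : ¬ (⊤:EReal) ≤ 0) h00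
  obtain ⟨pu, hpu0, hφu⟩ := ereal_exists_real hφufin (phi_nonneg h0 u)
  rw [hφu] at h00
  have h00r : γ * pu + (v - u) * (0 - u) ≤ 0 := by exact_mod_cast h00
  have hu0 : 0 ≤ u := by
    by_contra hcu
    push_neg at hcu
    nlinarith [mul_pos (show (0:ℝ) < v - u by linarith) (show (0:ℝ) < -u by linarith),
      mul_nonneg hγ.le hpu0]
  have huv : u ≤ v := by
    by_contra hcu
    push_neg at hcu
    nlinarith [mul_pos (show (0:ℝ) < u - v by linarith) (show (0:ℝ) < u by linarith),
      mul_nonneg hγ.le hpu0]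
  -- u ≠ v
  have huvne : u ≠ v := by
    intro hueq
    subst hueq
    -- φ u = 0 then F u ≤ lam then u ≤ τ, contradiction
    have hφv0 : conj (gfun lam h) u = 0 := by
      rw [hφu]
      have : pu ≤ 0 := by nlinarith
      exact_mod_cast le_antisymm this hpu0
    have hFle : conj h u ≤ (lam : EReal) := by
      by_contra hgt
      push_neg at hgt
      cases' eq_or_ne (conj h u) ⊤ with htp htp
      · rw [phi_top hlam h0 hge htp] at hφv0
        exact (by simp : (⊤:EReal) ≠ 0) hφv0
      · obtain ⟨r, hr0, hr⟩ := ereal_exists_real htp (conj_nonneg h0 u)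
        rw [phi_real hlam h0 hge hr] at hφv0
        have hrl : lam < r := by rw [hr] at hgt; exact_mod_cast hgt
        have : max 0 (r - lam) = 0 := by exact_mod_cast hφv0
        have := le_max_right (0:ℝ) (r - lam)
        nlinarith [le_max_right (0:ℝ) (r - lam), this]
    exact absurd (le_tau h0 hge hdom hu0 hFle) (not_le.mpr hτv)
  have huv' : u < v := lt_of_le_of_ne huv huvne
  -- u > τ
  have huτ : τ < u := by
    by_contra hc
    push_neg at hc
    have hFule : conj h u ≤ (lam : EReal) :=
      (conj_mono hge h0 hev hu0 hc).trans (conj_tau_le hlam h0 hge hdom)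
    have hpu0' : pu = 0 := by
      have := phi_zero_of_le hlam h0 hge hFule
      rw [hφu] at this
      exact_mod_cast this
    set s := (v - u) / γ with hsdef
    have hs0 : 0 < s := div_pos (by linarith) hγ
    have hsm : m < s := by rw [hsdef, lt_div_iff₀ hγ]; nlinarith
    obtain ⟨t, htsub⟩ := hne
    obtain ⟨rτ, hrτ0, hτeq⟩ := ereal_exists_real
      (ne_top_of_le_ne_top (EReal.coe_ne_top lam) (conj_tau_le hlam h0 hge hdom))
      (conj_nonneg h0 τ)
    have hrτlam : rτ ≤ lam := by
      have := conj_tau_le hlam h0 hge hdom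
      rw [hτeq] at this
      exact_mod_cast this
    set d := max s t with hddef
    have hdsub : d ∈ subdiff (conj h) τ := by
      intro y
      rw [hτeq]
      rcases le_or_gt y τ with hyτ | hyτ
      · have ht1 := htsub y
        rw [hτeq] at ht1
        refine le_trans ?_ ht1
        refine add_le_add (le_refl _) ?_
        exact_mod_cast (by nlinarith [le_max_right s t] : d * (y - τ) ≤ t * (y - τ))
      · cases' eq_or_ne (conj h y) ⊤ with htp htp
        · rw [htp]; exact le_top
        obtain ⟨ry, hry0, hry⟩ := ereal_exists_real htp (conj_nonneg h0 y)
        have hylam : lam < ry := by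
          have := lam_lt_conj h0 hge hdom (le_trans hτ0 hyτ.le) hyτ
          rw [hry] at this
          exact_mod_cast this
        have hsgy := hsg y
        rw [hφu, hpu0', phi_real hlam h0 hge hry, max_eq_right (by linarith)] at hsgy
        have hsgyr : γ * 0 + (v - u) * (y - u) ≤ γ * (ry - lam) := by exact_mod_cast hsgy
        have hsy : s * (y - u) ≤ ry - lam := by
          rw [hsdef, div_mul_eq_mul_div, div_le_iff₀ hγ]
          nlinarith
        rw [hry]
        rcases max_cases s t with ⟨hde, hst⟩ | ⟨hde, hst⟩
        · rw [hddef, hde]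
          exact_mod_cast (by nlinarith : rτ + s * (y - τ) ≤ ry)
        · have ht1 := htsub y
          rw [hτeq, hry] at ht1
          have : rτ + t * (y - τ) ≤ ry := by exact_mod_cast ht1
          rw [hddef, hde]
          exact_mod_cast this
    have hd0 : 0 ≤ d := le_trans (le_trans hm0 hsm.le) (le_max_left s t)
    have := hbd d hdsub hd0
    have := le_max_left s t
    nlinarith
  -- F u real, > lam
  have hFufin : conj h u ≠ ⊤ := by
    intro htp
    rw [phi_top hlam h0 hge htp] at hφu
    exact (EReal.coe_ne_top pu) hφu.symm
  obtain ⟨ru, hru0, hFu⟩ := ereal_exists_real hFufin (conj_nonneg h0 u)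
  have hlamu : lam < ru := by
    have := lam_lt_conj h0 hge hdom (le_trans hτ0 huτ.le) huτ
    rw [hFu] at this
    exact_mod_cast this
  have hpueq : pu = ru - lam := by
    have := phi_real hlam h0 hge hFu
    rw [hφu, max_eq_right (by linarith)] at this
    exact_mod_cast this
  -- final
  intro w
  cases' eq_or_ne (conj h w) ⊤ with ht ht
  · rw [ht, EReal.coe_mul_top_of_pos hγ]
    exact le_top
  obtain ⟨rw', hrw0, hFw⟩ := ereal_exists_real ht (conj_nonneg h0 w)
  set D : ℝ := |w - u| + 1 with hDdef
  have hD0 : 0 < D := by positivity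
  set t : ℝ := min 1 ((u - τ) / (2 * D)) with htdef
  have htpos : 0 < (u - τ) / (2 * D) := div_pos (by linarith) (by linarith)
  have ht0 : 0 < t := lt_min one_pos htpos
  have ht1 : t ≤ 1 := min_le_left _ _
  set wt : ℝ := u + t * (w - u) with hwtdef
  have h1 : t * D ≤ (u - τ) / 2 := by
    have h2 : t ≤ (u - τ) / (2 * D) := min_le_right _ _
    calc t * D ≤ (u - τ) / (2 * D) * D := mul_le_mul_of_nonneg_right h2 hD0.le
    _ = (u - τ) / 2 := by field_simp
  have habs2 : |w - u| ≤ D := by rw [hDdef]; linarith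
  have h1' : t * |w - u| ≤ (u - τ) / 2 :=
    le_trans (mul_le_mul_of_nonneg_left habs2 ht0.le) h1
  have h3 : -(t * (w - u)) ≤ t * |w - u| := by
    rw [← mul_neg]
    exact mul_le_mul_of_nonneg_left (neg_le_abs _) ht0.le
  have hwtτ : τ < wt := by
    rw [hwtdef]
    nlinarith [h1', h3]
  clear_value D t wt
  have hwt0 : 0 ≤ wt := le_trans hτ0 hwtτ.le
  have hconvF := conj_convex hhb u w (1 - t) t (by linarith) ht0.le (by ring)
  have hwteq : (1 - t) * u + t * w = wt := by rw [hwtdef]; ring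
  rw [hwteq, hFu, hFw] at hconvF
  have hconvF2 : conj h wt ≤ (((1 - t) * ru + t * rw' : ℝ) : EReal) := by
    refine hconvF.trans (le_of_eq ?_)
    rw [← EReal.coe_mul, ← EReal.coe_mul, ← EReal.coe_add]
  obtain ⟨rwt, hrwt0, hFwt⟩ := ereal_exists_real
    (ne_top_of_le_ne_top (EReal.coe_ne_top _) hconvF2) (conj_nonneg h0 wt)
  have hrwtle : rwt ≤ (1 - t) * ru + t * rw' := by
    rw [hFwt] at hconvF2
    exact_mod_cast hconvF2
  have hrwtlam : lam < rwt := by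
    have := lam_lt_conj h0 hge hdom hwt0 hwtτ
    rw [hFwt] at this
    exact_mod_cast this
  have hsgwt := hsg wt
  rw [hφu, hpueq, phi_real hlam h0 hge hFwt, max_eq_right (by linarith)] at hsgwt
  have hsgr : γ * (ru - lam) + (v - u) * (wt - u) ≤ γ * (rwt - lam) := by exact_mod_cast hsgwt
  have hwtu : wt - u = t * (w - u) := by rw [hwtdef]; ring
  rw [hwtu] at hsgr
  have step : t * ((v - u) * (w - u)) ≤ t * (γ * (rw' - ru)) := by
    nlinarith [mul_le_mul_of_nonneg_left hrwtle hγ.le]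
  have step2 : (v - u) * (w - u) ≤ γ * (rw' - ru) := le_of_mul_le_mul_left step ht0
  have final : γ * ru + (v - u) * (w - u) ≤ γ * rw' := by nlinarith [step2]
  rw [hFu, hFw]
  exact_mod_cast final

end Case3

theorem prox_conj_gfun (lam : ℝ) (h : ℝ → EReal) (hlam : 0 < lam)
    (h0 : h 0 = 0) (hge : ∀ x : ℝ, 0 ≤ h x)
    (hlsc : LowerSemicontinuous h) (hconv : EConvexOn h)
    (hdom : ∃ x : ℝ, 0 < x ∧ h x ≠ ⊤) (heven : ∀ x : ℝ, h (-x) = h x)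
    (γ : ℝ) (hγ : 0 < γ) :
    ∀ v : ℝ,
      ((|v| ≤ tau lam h → proxSet γ (conj (gfun lam h)) v = {v}) ∧
       (tau lam h < |v| →
          ((|v| : ℝ) : EReal) ≤ (tau lam h : EReal) + (γ : EReal) * mu lam h →
          proxSet γ (conj (gfun lam h)) v = {tau lam h * Real.sign v}) ∧
       ((tau lam h : EReal) + (γ : EReal) * mu lam h < ((|v| : ℝ) : EReal) →
          proxSet γ (conj (gfun lam h)) v = proxSet γ (conj h) v)) := by
  intro v
  have hφ0 : conj (gfun lam h) 0 = 0 := phi_zero hlam h0 hge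
  have hφge : ∀ x, 0 ≤ conj (gfun lam h) x := phi_nonneg h0
  have hφconv : EConvexOn (conj (gfun lam h)) :=
    conj_convex (fun x => ne_of_gt (lt_of_lt_of_le bot_lt_zero' (gfun_nonneg hlam hge x)))
  have hφev : ∀ x, conj (gfun lam h) (-x) = conj (gfun lam h) x := conj_even (gfun_even h0 heven)
  have hF0 : conj h 0 = 0 := conj_zero h0 hge
  have hFge : ∀ x, 0 ≤ conj h x := conj_nonneg h0
  have hτ0 : 0 ≤ tau lam h := tau_nonneg hlam h0 hge hdom
  refine ⟨?_, ?_, ?_⟩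
  · -- Case 1 : |v| ≤ τ
    intro hv
    apply prox_eq_singleton hγ hφge hφ0 hφconv
    have hFv : conj h v ≤ (lam : EReal) := by
      rw [conj_abs h0 heven]
      exact (conj_mono hge h0 heven (abs_nonneg v) hv).trans (conj_tau_le hlam h0 hge hdom)
    have hφv : conj (gfun lam h) v = 0 := phi_zero_of_le hlam h0 hge hFv
    intro w
    rw [hφv, mul_zero, zero_add, show ((v - v) * (w - v) : ℝ) = 0 by ring]
    rw [EReal.coe_zero]
    exact mul_nonneg (by exact_mod_cast hγ.le) (hφge w)
  · -- Case 2 : τ < |v| ≤ τ + γμ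
    intro hv1 hv2
    apply prox_eq_singleton hγ hφge hφ0 hφconv
    have hvne : v ≠ 0 := by
      intro hz; rw [hz, abs_zero] at hv1; exact absurd hτ0 (not_le.mpr hv1)
    obtain ⟨hσv, hσ1⟩ : v = Real.sign v * |v| ∧ Real.sign v * Real.sign v = 1 := by
      rcases lt_or_gt_of_ne hvne with hneg | hpos
      · rw [Real.sign_of_neg hneg, abs_of_neg hneg]; constructor <;> ring
      · rw [Real.sign_of_pos hpos, abs_of_pos hpos]; constructor <;> ring
    have hσcases : Real.sign v = 1 ∨ Real.sign v = -1 := by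
      rcases lt_or_gt_of_ne hvne with hneg | hpos
      · exact Or.inr (Real.sign_of_neg hneg)
      · exact Or.inl (Real.sign_of_pos hpos)
    have hφτσ : conj (gfun lam h) (tau lam h * Real.sign v) = 0 := by
      have hFτ : conj h (tau lam h * Real.sign v) ≤ (lam : EReal) := by
        rcases hσcases with hc | hc
        · rw [hc, mul_one]; exact conj_tau_le hlam h0 hge hdom
        · rw [hc, mul_neg_one, conj_even heven]; exact conj_tau_le hlam h0 hge hdom
      exact phi_zero_of_le hlam h0 hge hFτ
    have hsmu : (((|v| - tau lam h) / γ : ℝ) : EReal) ≤ mu lam h := by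
      cases' eq_or_ne (mu lam h) ⊤ with hm hm
      · rw [hm]; exact le_top
      obtain ⟨m, hm0, hmeq, _, _⟩ := mu_real hlam h0 hge hdom heven hm
      rw [hmeq] at hv2 ⊢
      have h2 : |v| ≤ tau lam h + γ * m := by exact_mod_cast hv2
      exact_mod_cast (by rw [div_le_iff₀ hγ]; nlinarith : (|v| - tau lam h) / γ ≤ m)
    intro w
    rw [hφτσ, mul_zero, zero_add]
    have hprod : (v - tau lam h * Real.sign v) * (w - tau lam h * Real.sign v)
        = (|v| - tau lam h) * (Real.sign v * w - tau lam h) := by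
      linear_combination (w - tau lam h * Real.sign v) * hσv
        - (|v| - tau lam h) * tau lam h * hσ1
    have hφw : conj (gfun lam h) w = conj (gfun lam h) (Real.sign v * w) := by
      rcases hσcases with hc | hc
      · rw [hc, one_mul]
      · rw [hc, show (-1 : ℝ) * w = -w by ring]
        exact (hφev w).symm
    rw [hprod, hφw]
    set w' := Real.sign v * w with hw'def
    rcases le_or_gt w' (tau lam h) with hwτ | hwτ
    · have hle0 : ((|v| - tau lam h) * (w' - tau lam h) : ℝ) ≤ 0 :=
        mul_nonpos_of_nonneg_of_nonpos (by linarith) (by linarith)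
      refine le_trans ?_ (mul_nonneg (by exact_mod_cast hγ.le) (hφge w'))
      exact_mod_cast hle0
    · cases' eq_or_ne (conj h w') ⊤ with ht ht
      · rw [phi_top hlam h0 hge ht, EReal.coe_mul_top_of_pos hγ]
        exact le_top
      obtain ⟨r, hr0, hr⟩ := ereal_exists_real ht (conj_nonneg h0 w')
      have hcore := case2_core hlam h0 hge hdom heven hwτ
        (div_nonneg (by linarith) hγ.le) hsmu
      rw [hr] at hcore
      have hcr : lam + (|v| - tau lam h) / γ * (w' - tau lam h) ≤ r := by exact_mod_cast hcore
      rw [phi_real hlam h0 hge hr]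
      have hfin : (|v| - tau lam h) * (w' - tau lam h) ≤ γ * max 0 (r - lam) := by
        have hgm : γ * ((|v| - tau lam h) / γ) = |v| - tau lam h := by field_simp
        nlinarith [le_max_right (0:ℝ) (r - lam), hγ, hgm]
      exact_mod_cast hfin
  · -- Case 3 : τ + γμ < |v|
    intro hv
    have hmne : mu lam h ≠ ⊤ := by
      intro hm
      rw [hm, EReal.coe_mul_top_of_pos hγ, EReal.coe_add_top] at hv
      exact not_top_lt hv
    obtain ⟨m, hm0, hmeq, hne, hbd⟩ := mu_real hlam h0 hge hdom heven hmne
    rw [hmeq] at hv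
    have hvr : tau lam h + γ * m < |v| := by exact_mod_cast hv
    ext u
    constructor
    · intro hu
      apply SG_mem_prox hγ hFge hF0
      have hsgφ := prox_SG hγ hφge hφ0 hφconv hu
      rcases le_or_gt 0 v with hv0 | hv0
      · rw [abs_of_nonneg hv0] at hvr
        exact SG_phi_to_F hlam h0 hge hdom heven hγ hm0 hne hbd hvr hsgφ
      · rw [abs_of_neg hv0] at hvr
        have h1 := SG_neg hφev hsgφ
        have h2 := SG_phi_to_F hlam h0 hge hdom heven hγ hm0 hne hbd hvr h1
        have h3 := SG_neg (conj_even heven) h2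
        rw [neg_neg, neg_neg] at h3
        exact h3
    · intro hu
      apply SG_mem_prox hγ hφge hφ0
      have hFconv : EConvexOn (conj h) :=
        conj_convex (fun x => ne_of_gt (lt_of_lt_of_le bot_lt_zero' (hge x)))
      have hsgF := prox_SG hγ hFge hF0 hFconv hu
      rcases le_or_gt 0 v with hv0 | hv0
      · rw [abs_of_nonneg hv0] at hvr
        exact SG_F_to_phi hlam h0 hge hdom heven hγ hm0 hne hbd hvr hsgF
      · rw [abs_of_neg hv0] at hvr
        have h1 := SG_neg (conj_even heven) hsgF
        have h2 := SG_F_to_phi hlam h0 hge hdom heven hγ hm0 hne hbd hvr h1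
        have h3 := SG_neg hφev h2
        rw [neg_neg, neg_neg] at h3
        exact h3
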